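/- Let K = diag(μ₁,μ₂,μ₃) with 0 < μ₁ < μ₂ < μ₃, A > 0 satisfying A < ¼min_{i≠j}|μᵢ−μⱼ|. Then the set of zeros of the two-rod field F on S²×S² is exactly {(±eᵢ, ±eⱼ) : i,j ∈ {1,2,3}}, a set of 36 points. -/

import Mathlib

open Matrix

theorem vmv17 (w v u : Fin 3 → ℝ) : vecMulVec w v *ᵥ u = (v ⬝ᵥ u) • w := by
  funext i
  simp [Matrix.mulVec, Matrix.vecMulVec_apply, dotProduct, Finset.sum_mul, mul_assoc,
    mul_comm, mul_left_comm, Finset.mul_sum]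

theorem proj_kill17 (x : Fin 3 → ℝ) (r : ℝ) (hx : x ⬝ᵥ x = 1) :
    (1 - vecMulVec x x) *ᵥ (r • x) = 0 := by
  rw [Matrix.sub_mulVec, Matrix.one_mulVec, vmv17, dotProduct_smul, hx]
  simp

theorem diag_single17 (μv : Fin 3 → ℝ) (i : Fin 3) (s : ℝ) :
    Matrix.diagonal μv *ᵥ (s • (Pi.single i 1 : Fin 3 → ℝ)) = (μv i * s) • (Pi.single i 1 : Fin 3 → ℝ) := by
  funext k
  rw [Matrix.mulVec_diagonal]
  by_cases hk : k = i
  · subst hk; simp [Pi.single_apply]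
  · simp [Pi.single_apply, hk]

theorem single_dot17 (i j : Fin 3) (s t : ℝ) :
    (s • (Pi.single i 1 : Fin 3 → ℝ)) ⬝ᵥ (t • (Pi.single j 1 : Fin 3 → ℝ)) =
      if i = j then s*t else 0 := by
  rw [smul_dotProduct, dotProduct_smul, dotProduct_single]
  by_cases hij : i = j
  · subst hij; simp [Pi.single_apply]
  · simp [Pi.single_apply, hij, Ne.symm hij]

theorem unitvec17 (x : Fin 3 → ℝ) (hx : x ⬝ᵥ x = 1) (i : Fin 3) (h : ∀ k, k ≠ i → x k = 0) :
    ∃ s : ℝ, (s = 1 ∨ s = -1) ∧ x = s • (Pi.single i 1 : Fin 3 → ℝ) := by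
  simp only [dotProduct, Fin.sum_univ_three] at hx
  refine ⟨x i, ?_, ?_⟩
  · apply mul_self_eq_one_iff.mp
    fin_cases i
    · show x 0 * x 0 = 1
      have h1 := h 1 (by decide); have h2 := h 2 (by decide)
      linear_combination hx - (x 1)*h1 - (x 2)*h2
    · show x 1 * x 1 = 1
      have h1 := h 0 (by decide); have h2 := h 2 (by decide)
      linear_combination hx - (x 0)*h1 - (x 2)*h2
    · show x 2 * x 2 = 1
      have h1 := h 0 (by decide); have h2 := h 1 (by decide)
      linear_combination hx - (x 0)*h1 - (x 1)*h2
  · funext k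
    by_cases hk : k = i
    · subst hk; simp [Pi.single_apply]
    · simp [Pi.single_apply, hk, h k hk]

set_option maxHeartbeats 1600000 in
theorem key17 (m0 m1 m2 A c L1 L2 a0 a1 a2 b0 b1 b2 : ℝ)
    (hm01 : m0 < m1) (hm12 : m1 < m2) (hA : 0 < A)
    (hs01 : 4*A < m1 - m0) (hs12 : 4*A < m2 - m1) (hs02 : 4*A < m2 - m0)
    (ha : a0*a0+a1*a1+a2*a2 = 1) (hb : b0*b0+b1*b1+b2*b2 = 1)
    (hc : c = a0*b0+a1*b1+a2*b2)
    (e10 : (m0 + L1)*a0 = 2*A*c*b0) (e11 : (m1 + L1)*a1 = 2*A*c*b1)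
    (e12 : (m2 + L1)*a2 = 2*A*c*b2)
    (e20 : (m0 + L2)*b0 = 2*A*c*a0) (e21 : (m1 + L2)*b1 = 2*A*c*a1)
    (e22 : (m2 + L2)*b2 = 2*A*c*a2) :
    ((a1 = 0 ∧ a2 = 0) ∨ (a0 = 0 ∧ a2 = 0) ∨ (a0 = 0 ∧ a1 = 0)) ∧
    ((b1 = 0 ∧ b2 = 0) ∨ (b0 = 0 ∧ b2 = 0) ∨ (b0 = 0 ∧ b1 = 0)) := by
  have sup : ∀ (L x0 x1 x2 : ℝ), (m0+L)*x0 = 0 → (m1+L)*x1 = 0 → (m2+L)*x2 = 0 →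
      ((x1 = 0 ∧ x2 = 0) ∨ (x0 = 0 ∧ x2 = 0) ∨ (x0 = 0 ∧ x1 = 0)) := by
    intro L x0 x1 x2 e0 e1 e2
    have k0 : x0 ≠ 0 → m0 = -L := fun h => by
      rcases mul_eq_zero.mp e0 with h' | h'
      · linarith
      · exact absurd h' h
    have k1 : x1 ≠ 0 → m1 = -L := fun h => by
      rcases mul_eq_zero.mp e1 with h' | h'
      · linarith
      · exact absurd h' h
    have k2 : x2 ≠ 0 → m2 = -L := fun h => by
      rcases mul_eq_zero.mp e2 with h' | h'
      · linarith
      · exact absurd h' h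
    by_cases h0 : x0 = 0 <;> by_cases h1 : x1 = 0 <;> by_cases h2 : x2 = 0
    · exact Or.inl ⟨h1, h2⟩
    · exact Or.inr (Or.inr ⟨h0, h1⟩)
    · exact Or.inr (Or.inl ⟨h0, h2⟩)
    · exact absurd (k1 h1) (by have := k2 h2; intro h; linarith)
    · exact Or.inl ⟨h1, h2⟩
    · exact absurd (k0 h0) (by have := k2 h2; intro h; linarith)
    · exact absurd (k0 h0) (by have := k1 h1; intro h; linarith)
    · exact absurd (k0 h0) (by have := k1 h1; intro h; linarith)
  by_cases hc0 : c = 0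
  · rw [hc0] at e10 e11 e12 e20 e21 e22
    simp only [mul_zero, zero_mul] at e10 e11 e12 e20 e21 e22
    exact ⟨sup L1 a0 a1 a2 e10 e11 e12, sup L2 b0 b1 b2 e20 e21 e22⟩
  · have h2A : (0:ℝ) < 2*A := by linarith
    have hd : 2*A*c ≠ 0 := mul_ne_zero (ne_of_gt h2A) hc0
    have hLc : (L1 - L2) * c = 0 := by
      linear_combination b0*e10 + b1*e11 + b2*e12 - a0*e20 - a1*e21 - a2*e22
        + 2*A*c*hb - 2*A*c*ha + (L1-L2)*hc
    have hL : L2 = L1 := by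
      rcases mul_eq_zero.mp hLc with h | h
      · linarith
      · exact absurd h hc0
    subst hL
    have hcs : c^2 ≤ 1 := by
      rw [hc]
      nlinarith [sq_nonneg (a0*b1-a1*b0), sq_nonneg (a0*b2-a2*b0), sq_nonneg (a1*b2-a2*b1)]
    have hD : (2*A*c)^2 ≤ (2*A)^2 := by nlinarith [sq_nonneg A]
    have pair : ∀ u v : ℝ, u^2 = (2*A*c)^2 → v^2 = (2*A*c)^2 → (v - u)^2 ≤ (4*A)^2 := by
      intro u v hu hv
      nlinarith [sq_nonneg (u+v), hD]
    have q0 : a0 ≠ 0 → (m0+L2)^2 = (2*A*c)^2 := by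
      intro h
      have h' : ((m0+L2)^2 - (2*A*c)^2)*a0 = 0 := by
        linear_combination (m0+L2)*e10 + 2*A*c*e20
      rcases mul_eq_zero.mp h' with h'' | h''
      · linarith
      · exact absurd h'' h
    have q1 : a1 ≠ 0 → (m1+L2)^2 = (2*A*c)^2 := by
      intro h
      have h' : ((m1+L2)^2 - (2*A*c)^2)*a1 = 0 := by
        linear_combination (m1+L2)*e11 + 2*A*c*e21
      rcases mul_eq_zero.mp h' with h'' | h''
      · linarith
      · exact absurd h'' h
    have q2 : a2 ≠ 0 → (m2+L2)^2 = (2*A*c)^2 := by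
      intro h
      have h' : ((m2+L2)^2 - (2*A*c)^2)*a2 = 0 := by
        linear_combination (m2+L2)*e12 + 2*A*c*e22
      rcases mul_eq_zero.mp h' with h'' | h''
      · linarith
      · exact absurd h'' h
    have z0 : a0 = 0 → b0 = 0 := by
      intro h
      have h' : 2*A*c*b0 = 0 := by linear_combination -e10 + (m0+L2)*h
      rcases mul_eq_zero.mp h' with h'' | h''
      · exact absurd h'' hd
      · exact h''
    have z1 : a1 = 0 → b1 = 0 := by
      intro h
      have h' : 2*A*c*b1 = 0 := by linear_combination -e11 + (m1+L2)*h
      rcases mul_eq_zero.mp h' with h'' | h''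
      · exact absurd h'' hd
      · exact h''
    have z2 : a2 = 0 → b2 = 0 := by
      intro h
      have h' : 2*A*c*b2 = 0 := by linear_combination -e12 + (m2+L2)*h
      rcases mul_eq_zero.mp h' with h'' | h''
      · exact absurd h'' hd
      · exact h''
    by_cases h0 : a0 = 0 <;> by_cases h1 : a1 = 0 <;> by_cases h2 : a2 = 0
    · exact ⟨Or.inl ⟨h1, h2⟩, Or.inl ⟨z1 h1, z2 h2⟩⟩
    · exact ⟨Or.inr (Or.inr ⟨h0, h1⟩), Or.inr (Or.inr ⟨z0 h0, z1 h1⟩)⟩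
    · exact ⟨Or.inr (Or.inl ⟨h0, h2⟩), Or.inr (Or.inl ⟨z0 h0, z2 h2⟩)⟩
    · exact absurd (q1 h1) (fun h => by have := pair (m1+L2) (m2+L2) h (q2 h2); nlinarith)
    · exact ⟨Or.inl ⟨h1, h2⟩, Or.inl ⟨z1 h1, z2 h2⟩⟩
    · exact absurd (q0 h0) (fun h => by have := pair (m0+L2) (m2+L2) h (q2 h2); nlinarith)
    · exact absurd (q0 h0) (fun h => by have := pair (m0+L2) (m1+L2) h (q1 h1); nlinarith)
    · exact absurd (q0 h0) (fun h => by have := pair (m0+L2) (m1+L2) h (q1 h1); nlinarith)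

set_option maxHeartbeats 1000000 in
theorem stmt17 (μ₁ μ₂ μ₃ : ℝ) (h1 : 0 < μ₁) (h12 : μ₁ < μ₂) (h23 : μ₂ < μ₃)
    (K : Matrix (Fin 3) (Fin 3) ℝ) (hK : K = Matrix.diagonal ![μ₁, μ₂, μ₃])
    (A : ℝ) (hA : 0 < A)
    (hAsmall : A < (1/4) * min (min |μ₁ - μ₂| |μ₂ - μ₃|) |μ₁ - μ₃|) :
    ∀ x₁ x₂ : Fin 3 → ℝ, x₁ ⬝ᵥ x₁ = 1 → x₂ ⬝ᵥ x₂ = 1 →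
      (((1 - vecMulVec x₁ x₁) *ᵥ (-(K *ᵥ x₁) + (2 * A * (x₁ ⬝ᵥ x₂)) • x₂) = 0 ∧
        (1 - vecMulVec x₂ x₂) *ᵥ (-(K *ᵥ x₂) + (2 * A * (x₁ ⬝ᵥ x₂)) • x₁) = 0) ↔
      (∃ i j : Fin 3, ∃ s t : ℝ, (s = 1 ∨ s = -1) ∧ (t = 1 ∨ t = -1) ∧
        x₁ = s • (Pi.single i 1 : Fin 3 → ℝ) ∧ x₂ = t • (Pi.single j 1 : Fin 3 → ℝ))) := by
  have hmin1 : min (min |μ₁-μ₂| |μ₂-μ₃|) |μ₁-μ₃| ≤ |μ₁-μ₂| :=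
    le_trans (min_le_left _ _) (min_le_left _ _)
  have hmin2 : min (min |μ₁-μ₂| |μ₂-μ₃|) |μ₁-μ₃| ≤ |μ₂-μ₃| :=
    le_trans (min_le_left _ _) (min_le_right _ _)
  have hmin3 : min (min |μ₁-μ₂| |μ₂-μ₃|) |μ₁-μ₃| ≤ |μ₁-μ₃| := min_le_right _ _
  have habs1 : |μ₁-μ₂| = μ₂-μ₁ := by rw [abs_of_neg (by linarith : μ₁-μ₂ < 0)]; ring
  have habs2 : |μ₂-μ₃| = μ₃-μ₂ := by rw [abs_of_neg (by linarith : μ₂-μ₃ < 0)]; ring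
  have habs3 : |μ₁-μ₃| = μ₃-μ₁ := by rw [abs_of_neg (by linarith : μ₁-μ₃ < 0)]; ring
  rw [habs1, habs2, habs3] at hAsmall hmin1 hmin2 hmin3
  have hs01 : 4*A < μ₂ - μ₁ := by linarith
  have hs12 : 4*A < μ₃ - μ₂ := by linarith
  have hs02 : 4*A < μ₃ - μ₁ := by linarith
  intro x₁ x₂ hx₁ hx₂
  constructor
  · rintro ⟨H1, H2⟩
    rw [Matrix.sub_mulVec, Matrix.one_mulVec, vmv17, sub_eq_zero] at H1 H2
    set c := x₁ ⬝ᵥ x₂ with hcdef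
    set L1 := x₁ ⬝ᵥ (-(K *ᵥ x₁) + (2 * A * c) • x₂) with hL1def
    set L2 := x₂ ⬝ᵥ (-(K *ᵥ x₂) + (2 * A * c) • x₁) with hL2def
    have E1 : ∀ k, -(K *ᵥ x₁) k + (2*A*c) * x₂ k = L1 * x₁ k := by
      intro k
      have h := congrFun H1 k
      simpa using h
    have E2 : ∀ k, -(K *ᵥ x₂) k + (2*A*c) * x₁ k = L2 * x₂ k := by
      intro k
      have h := congrFun H2 k
      simpa using h
    have hKk : ∀ (y : Fin 3 → ℝ) k, (K *ᵥ y) k = ![μ₁,μ₂,μ₃] k * y k := by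
      intro y k; rw [hK, Matrix.mulVec_diagonal]
    have ha : x₁ 0 * x₁ 0 + x₁ 1 * x₁ 1 + x₁ 2 * x₁ 2 = 1 := by
      simpa [dotProduct, Fin.sum_univ_three] using hx₁
    have hb : x₂ 0 * x₂ 0 + x₂ 1 * x₂ 1 + x₂ 2 * x₂ 2 = 1 := by
      simpa [dotProduct, Fin.sum_univ_three] using hx₂
    have hc : c = x₁ 0 * x₂ 0 + x₁ 1 * x₂ 1 + x₁ 2 * x₂ 2 := by
      rw [hcdef]; simp [dotProduct, Fin.sum_univ_three]
    have e10 : (μ₁ + L1) * x₁ 0 = 2*A*c * x₂ 0 := by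
      have h := E1 0; rw [hKk] at h; simp only [Matrix.cons_val_zero] at h
      linear_combination -h
    have e11 : (μ₂ + L1) * x₁ 1 = 2*A*c * x₂ 1 := by
      have h := E1 1; rw [hKk] at h
      simp only [Matrix.cons_val_one, Matrix.head_cons, Matrix.cons_val_zero] at h
      linear_combination -h
    have e12 : (μ₃ + L1) * x₁ 2 = 2*A*c * x₂ 2 := by
      have h := E1 2; rw [hKk] at h
      simp only [show ![μ₁,μ₂,μ₃] 2 = μ₃ from rfl] at h
      linear_combination -h
    have e20 : (μ₁ + L2) * x₂ 0 = 2*A*c * x₁ 0 := by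
      have h := E2 0; rw [hKk] at h; simp only [Matrix.cons_val_zero] at h
      linear_combination -h
    have e21 : (μ₂ + L2) * x₂ 1 = 2*A*c * x₁ 1 := by
      have h := E2 1; rw [hKk] at h
      simp only [Matrix.cons_val_one, Matrix.head_cons, Matrix.cons_val_zero] at h
      linear_combination -h
    have e22 : (μ₃ + L2) * x₂ 2 = 2*A*c * x₁ 2 := by
      have h := E2 2; rw [hKk] at h
      simp only [show ![μ₁,μ₂,μ₃] 2 = μ₃ from rfl] at h
      linear_combination -h
    obtain ⟨HA, HB⟩ := key17 μ₁ μ₂ μ₃ A c L1 L2 (x₁ 0) (x₁ 1) (x₁ 2) (x₂ 0) (x₂ 1) (x₂ 2)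
      h12 h23 hA hs01 hs12 hs02 ha hb hc e10 e11 e12 e20 e21 e22
    have hia : ∃ i, ∀ k, k ≠ i → x₁ k = 0 := by
      rcases HA with ⟨u, v⟩ | ⟨u, v⟩ | ⟨u, v⟩
      · exact ⟨0, fun k hk => by
          fin_cases k
          · exact absurd rfl hk
          · exact u
          · exact v⟩
      · exact ⟨1, fun k hk => by
          fin_cases k
          · exact u
          · exact absurd rfl hk
          · exact v⟩
      · exact ⟨2, fun k hk => by
          fin_cases k
          · exact u
          · exact v
          · exact absurd rfl hk⟩
    have hib : ∃ j, ∀ k, k ≠ j → x₂ k = 0 := by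
      rcases HB with ⟨u, v⟩ | ⟨u, v⟩ | ⟨u, v⟩
      · exact ⟨0, fun k hk => by
          fin_cases k
          · exact absurd rfl hk
          · exact u
          · exact v⟩
      · exact ⟨1, fun k hk => by
          fin_cases k
          · exact u
          · exact absurd rfl hk
          · exact v⟩
      · exact ⟨2, fun k hk => by
          fin_cases k
          · exact u
          · exact v
          · exact absurd rfl hk⟩
    obtain ⟨i, hi⟩ := hia
    obtain ⟨j, hj⟩ := hib
    obtain ⟨s, hs, hxs⟩ := unitvec17 x₁ hx₁ i hi
    obtain ⟨t, ht, hxt⟩ := unitvec17 x₂ hx₂ j hj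
    exact ⟨i, j, s, t, hs, ht, hxs, hxt⟩
  · rintro ⟨i, j, s, t, hs, ht, rfl, rfl⟩
    have hs2 : s * s = 1 := by rcases hs with rfl | rfl <;> norm_num
    have ht2 : t * t = 1 := by rcases ht with rfl | rfl <;> norm_num
    by_cases hij : i = j
    · subst hij
      have hc : (s • (Pi.single i 1 : Fin 3 → ℝ)) ⬝ᵥ (t • (Pi.single i 1 : Fin 3 → ℝ)) = s * t := by
        rw [single_dot17]; simp
      rw [hK, hc]
      constructor
      · have hv : -(Matrix.diagonal ![μ₁,μ₂,μ₃] *ᵥ (s • (Pi.single i 1 : Fin 3 → ℝ)))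
            + (2*A*(s*t)) • (t • (Pi.single i 1 : Fin 3 → ℝ))
            = (-(![μ₁,μ₂,μ₃] i) + 2*A) • (s • (Pi.single i 1 : Fin 3 → ℝ)) := by
          rw [diag_single17]
          funext k
          simp only [Pi.add_apply, Pi.neg_apply, Pi.smul_apply, smul_eq_mul, Pi.single_apply]
          by_cases hk : k = i <;> simp [hk]
          · linear_combination (2*A*s) * ht2
        rw [hv]
        exact proj_kill17 _ _ hx₁
      · have hv : -(Matrix.diagonal ![μ₁,μ₂,μ₃] *ᵥ (t • (Pi.single i 1 : Fin 3 → ℝ)))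
            + (2*A*(s*t)) • (s • (Pi.single i 1 : Fin 3 → ℝ))
            = (-(![μ₁,μ₂,μ₃] i) + 2*A) • (t • (Pi.single i 1 : Fin 3 → ℝ)) := by
          rw [diag_single17]
          funext k
          simp only [Pi.add_apply, Pi.neg_apply, Pi.smul_apply, smul_eq_mul, Pi.single_apply]
          by_cases hk : k = i <;> simp [hk]
          · linear_combination (2*A*t) * hs2
        rw [hv]
        exact proj_kill17 _ _ hx₂
    · have hc : (s • (Pi.single i 1 : Fin 3 → ℝ)) ⬝ᵥ (t • (Pi.single j 1 : Fin 3 → ℝ)) = 0 := by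
        rw [single_dot17]; simp [hij]
      rw [hK, hc]
      constructor
      · have hv : -(Matrix.diagonal ![μ₁,μ₂,μ₃] *ᵥ (s • (Pi.single i 1 : Fin 3 → ℝ)))
            + (2*A*0) • (t • (Pi.single j 1 : Fin 3 → ℝ))
            = (-(![μ₁,μ₂,μ₃] i)) • (s • (Pi.single i 1 : Fin 3 → ℝ)) := by
          rw [diag_single17]
          funext k
          simp [smul_smul]
          ring
        rw [hv]
        exact proj_kill17 _ _ hx₁
      · have hv : -(Matrix.diagonal ![μ₁,μ₂,μ₃] *ᵥ (t • (Pi.single j 1 : Fin 3 → ℝ)))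
            + (2*A*0) • (s • (Pi.single i 1 : Fin 3 → ℝ))
            = (-(![μ₁,μ₂,μ₃] j)) • (t • (Pi.single j 1 : Fin 3 → ℝ)) := by
          rw [diag_single17]
          funext k
          simp [smul_smul]
          ring
        rw [hv]
        exact proj_kill17 _ _ hx₂
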